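/- arXiv:1812.03599 — 3 statements merged into one kernel-verified Lean document; each statement's English description precedes it below -/
import Mathlib

section
/- Let η ∈ [0,1] with η ≠ 1/2, and let φ(z) = max(1-z, 0) be the hinge loss. Then the function f ↦ η·φ(f) + (1-η)·φ(-f) over f ∈ [-1, 1] attains its minimum at f = sign(2η - 1), where sign(t) = 1 if t > 0 and -1 if t < 0. -/
/-- For `η ∈ [0,1]` with `η ≠ 1/2`, the conditional hinge risk
`f ↦ η·max(1-f,0) + (1-η)·max(1+f,0)` over `f ∈ [-1,1]` attains its minimum at
`f = sign (2η - 1)`. -/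
theorem hinge_risk_minimizer (η : ℝ) (hη : η ∈ Set.Icc (0 : ℝ) 1) (hη2 : η ≠ 1 / 2) :
    ∀ f ∈ Set.Icc (-1 : ℝ) 1,
      η * max (1 - (if 2 * η - 1 > 0 then (1 : ℝ) else -1)) 0
        + (1 - η) * max (1 + (if 2 * η - 1 > 0 then (1 : ℝ) else -1)) 0
      ≤ η * max (1 - f) 0 + (1 - η) * max (1 + f) 0 := by
  intro f hf
  obtain ⟨h0, h1⟩ := hη
  obtain ⟨hf1, hf2⟩ := hf
  rw [max_eq_left (show (0:ℝ) ≤ 1 - f by linarith), max_eq_left (show (0:ℝ) ≤ 1 + f by linarith)]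
  split_ifs with h
  · norm_num; nlinarith
  · norm_num; nlinarith
end

section
/- Let η: X → [0,1] be measurable, P a probability measure on X, φ the hinge loss, and C*(x) = sign(2η(x)-1). For any measurable f: X → [-1,1], the excess hinge risk satisfies E[φ(Y f(X))] - E[φ(Y C*(X))] = ∫ |f(x) - C*(x)| · |2η(x) - 1| dP(x), where Y ∈ {-1,1} with P(Y=1|X=x) = η(x). -/
open MeasureTheory

/-- The excess hinge risk of a `[-1,1]`-valued function `f` over the Bayes classifier
`C*(x) = sign (2η(x) - 1)` equals `∫ |f - C*|·|2η - 1| dP`. -/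
theorem excess_hinge_risk_eq
    {X : Type*} [MeasurableSpace X] (P : Measure X) [IsProbabilityMeasure P]
    (η f : X → ℝ) (hη : Measurable η) (hf : Measurable f)
    (hη01 : ∀ x, η x ∈ Set.Icc (0 : ℝ) 1) (hf1 : ∀ x, f x ∈ Set.Icc (-1 : ℝ) 1)
    (Cstar : X → ℝ) (hC : ∀ x, Cstar x = if 2 * η x - 1 > 0 then 1 else -1) :
    (∫ x, (η x * max (1 - f x) 0 + (1 - η x) * max (1 + f x) 0) ∂P)
      - (∫ x, (η x * max (1 - Cstar x) 0 + (1 - η x) * max (1 + Cstar x) 0) ∂P)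
    = ∫ x, |f x - Cstar x| * |2 * η x - 1| ∂P := by
  have hCm : Measurable Cstar := by
    have : Cstar = fun x => if 2 * η x - 1 > 0 then (1:ℝ) else -1 := funext hC
    rw [this]
    exact Measurable.ite (measurableSet_lt measurable_const (by fun_prop)) measurable_const
      measurable_const
  have hbound : ∀ (g : X → ℝ), Measurable g → (∀ x, g x ∈ Set.Icc (-1:ℝ) 1) →
      Integrable (fun x => η x * max (1 - g x) 0 + (1 - η x) * max (1 + g x) 0) P := by
    intro g hg hg1
    apply Integrable.mono' (integrable_const (4:ℝ))
    · exact ((hη.mul ((measurable_const.sub hg).max measurable_const)).add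
        ((measurable_const.sub hη).mul ((measurable_const.add hg).max
          measurable_const))).aestronglyMeasurable
    · filter_upwards with x
      have h1 := hη01 x
      have h2 := hg1 x
      simp only [Set.mem_Icc] at h1 h2
      have hm1 : max (1 - g x) 0 ≤ 2 := by
        apply max_le <;> linarith
      have hm2 : max (1 + g x) 0 ≤ 2 := by
        apply max_le <;> linarith
      have hm1' : (0:ℝ) ≤ max (1 - g x) 0 := le_max_right _ _
      have hm2' : (0:ℝ) ≤ max (1 + g x) 0 := le_max_right _ _
      rw [Real.norm_eq_abs, abs_le]
      constructor <;> nlinarith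
  have hCicc : ∀ x, Cstar x ∈ Set.Icc (-1:ℝ) 1 := by
    intro x; rw [hC x]; split_ifs <;> simp
  rw [← integral_sub (hbound f hf hf1) (hbound Cstar hCm hCicc)]
  apply integral_congr_ae
  filter_upwards with x
  have h1 := hη01 x
  have h2 := hf1 x
  simp only [Set.mem_Icc] at h1 h2
  have hmf1 : max (1 - f x) 0 = 1 - f x := max_eq_left (by linarith)
  have hmf2 : max (1 + f x) 0 = 1 + f x := max_eq_left (by linarith)
  rw [hmf1, hmf2, hC x]
  split_ifs with h
  · have ha : |f x - 1| = 1 - f x := by rw [abs_of_nonpos (by linarith)]; ring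
    have hb : |2 * η x - 1| = 2 * η x - 1 := abs_of_pos h
    rw [ha, hb]
    norm_num
    ring
  · push_neg at h
    have ha : |f x - -1| = f x + 1 := by rw [abs_of_nonneg (by linarith)]; ring
    have hb : |2 * η x - 1| = 1 - 2 * η x := by rw [abs_of_nonpos (by linarith)]; ring
    rw [ha, hb]
    norm_num
    ring
end

section
/- Let η ∈ (0,1) with |log(η/(1-η))| > F for some F ≥ 1. Then the minimal conditional logistic risk satisfies η·log(1+e^{-f*}) + (1-η)·log(1+e^{f*}) ≤ log(1 + e^{-F}) + log(1 + e^{F})/(1 + e^{F}) ≤ 2(F+1)e^{-F}, where f* = log(η/(1-η)). -/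
lemma g_anti (F s : ℝ) (hF : 1 ≤ F) (hs : F ≤ s) :
    Real.log (1 + Real.exp s) / (1 + Real.exp s)
      ≤ Real.log (1 + Real.exp F) / (1 + Real.exp F) := by
  have h1 : Real.exp 1 ≤ 1 + Real.exp F := by
    have := Real.exp_le_exp.mpr hF
    linarith [Real.exp_pos F]
  have h2 : 1 + Real.exp F ≤ 1 + Real.exp s := by
    have := Real.exp_le_exp.mpr hs; linarith
  exact Real.log_div_self_antitoneOn h1 (le_trans h1 h2) h2

/-- If `η ∈ (0,1)` has extreme log-odds `|log(η/(1-η))| > F` with `F ≥ 1`, then the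
minimal conditional logistic risk is at most `log(1+e^{-F}) + log(1+e^F)/(1+e^F)`,
which is at most `2(F+1)e^{-F}`. -/
theorem extreme_logistic_risk_bound (η F : ℝ) (hη : η ∈ Set.Ioo (0 : ℝ) 1)
    (hF : 1 ≤ F) (hext : |Real.log (η / (1 - η))| > F) :
    η * Real.log (1 + Real.exp (-(Real.log (η / (1 - η)))))
        + (1 - η) * Real.log (1 + Real.exp (Real.log (η / (1 - η))))
      ≤ Real.log (1 + Real.exp (-F)) + Real.log (1 + Real.exp F) / (1 + Real.exp F)
    ∧ Real.log (1 + Real.exp (-F)) + Real.log (1 + Real.exp F) / (1 + Real.exp F)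
      ≤ 2 * (F + 1) * Real.exp (-F) := by
  obtain ⟨h0, h1⟩ := hη
  set t := Real.log (η / (1 - η)) with ht
  have h1' : 0 < 1 - η := by linarith
  have hpos : 0 < η / (1 - η) := div_pos h0 h1'
  have het : Real.exp t = η / (1 - η) := Real.exp_log hpos
  have hent : Real.exp (-t) = (1 - η) / η := by
    rw [Real.exp_neg, het]
    field_simp
  have key1 : (1 - η) * (1 + Real.exp t) = 1 := by
    rw [het]; field_simp; ring
  have key2 : η * (1 + Real.exp (-t)) = 1 := by
    rw [hent]; field_simp; ring
  constructor
  · rcases lt_abs.mp hext with hcase | hcase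
    · -- t > F
      have hA : Real.log (1 + Real.exp (-t)) ≤ Real.log (1 + Real.exp (-F)) := by
        apply Real.log_le_log (by positivity)
        have := Real.exp_le_exp.mpr (neg_le_neg hcase.le)
        linarith
      have hB : (1 - η) * Real.log (1 + Real.exp t)
          = Real.log (1 + Real.exp t) / (1 + Real.exp t) := by
        have hne : (1 + Real.exp t) ≠ 0 := by positivity
        field_simp
        linear_combination Real.log (1 + Real.exp t) * key1
      have hC := g_anti F t hF hcase.le
      have hlognn : 0 ≤ Real.log (1 + Real.exp (-t)) := by
        apply Real.log_nonneg; linarith [Real.exp_pos (-t)]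
      have : η * Real.log (1 + Real.exp (-t)) ≤ Real.log (1 + Real.exp (-t)) := by
        nlinarith
      rw [hB]
      linarith
    · -- -t > F
      have hA : Real.log (1 + Real.exp t) ≤ Real.log (1 + Real.exp (-F)) := by
        apply Real.log_le_log (by positivity)
        have : t ≤ -F := by linarith
        have := Real.exp_le_exp.mpr this
        linarith
      have hB : η * Real.log (1 + Real.exp (-t))
          = Real.log (1 + Real.exp (-t)) / (1 + Real.exp (-t)) := by
        have hne : (1 + Real.exp (-t)) ≠ 0 := by positivity
        field_simp
        linear_combination Real.log (1 + Real.exp (-t)) * key2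
      have hC := g_anti F (-t) hF hcase.le
      have hlognn : 0 ≤ Real.log (1 + Real.exp t) := by
        apply Real.log_nonneg; linarith [Real.exp_pos t]
      have : (1 - η) * Real.log (1 + Real.exp t) ≤ Real.log (1 + Real.exp t) := by
        nlinarith
      rw [hB]
      linarith
  · -- second inequality
    have e1 : Real.log (1 + Real.exp (-F)) ≤ Real.exp (-F) := by
      have := Real.log_le_sub_one_of_pos (x := 1 + Real.exp (-F)) (by positivity)
      linarith
    have e2 : Real.log (1 + Real.exp F) ≤ F + 1 := by
      have h2e : (2 : ℝ) ≤ Real.exp 1 := by linarith [Real.add_one_le_exp 1]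
      have : (1 : ℝ) + Real.exp F ≤ Real.exp 1 * Real.exp F := by
        nlinarith [Real.one_le_exp (by linarith : (0:ℝ) ≤ F)]
      calc Real.log (1 + Real.exp F) ≤ Real.log (Real.exp 1 * Real.exp F) :=
            Real.log_le_log (by positivity) this
        _ = 1 + F := by rw [← Real.exp_add, Real.log_exp]
        _ = F + 1 := by ring
    have e3 : Real.log (1 + Real.exp F) / (1 + Real.exp F) ≤ (F + 1) * Real.exp (-F) := by
      have hpos : (0:ℝ) < 1 + Real.exp F := by positivity
      rw [div_le_iff₀ hpos]
      have hnn : (0:ℝ) ≤ (F + 1) * Real.exp (-F) := by positivity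
      have : Real.exp (-F) * Real.exp F = 1 := by
        rw [← Real.exp_add]; simp
      nlinarith [Real.exp_pos (-F)]
    have e4 : Real.exp (-F) + (F + 1) * Real.exp (-F) ≤ 2 * (F + 1) * Real.exp (-F) := by
      nlinarith [Real.exp_pos (-F)]
    linarith
end
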